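/- Let F be a p-adic field (a finite extension of ℚ_p for some prime p), D a finite-dimensional central division algebra over F, and m ≥ 1. Let X = fromBlocks(0, B, P, 0) ∈ M_{2m}(D) with B, P ∈ M_m(D), and suppose X is semisimple. Then there exist invertible h₁, h₂ ∈ M_m(D), a natural number r with 0 ≤ r ≤ m, and an invertible semisimple A ∈ M_r(D) such that fromBlocks(h₁,0,0,h₂)·X·fromBlocks(h₁,0,0,h₂)⁻¹ = fromBlocks(0, B₀, P₀, 0), where B₀ = fromBlocks(1_r, 0, 0, 0) ∈ M_m(D) and P₀ = fromBlocks(A, 0, 0, 0) ∈ M_m(D) (blocks of sizes r and m−r). -/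

import Mathlib

open Matrix

/-- The `F`-linear endomorphism `v ↦ Z · v` of `ι → D` induced by a square matrix `Z`. -/
def Matrix.mulVecEnd (F : Type*) [Field F] {D : Type*} [DivisionRing D] [Algebra F D]
    {ι : Type*} [Fintype ι] (Z : Matrix ι ι D) :
    Module.End F (ι → D) where
  toFun v := Z.mulVec v
  map_add' u v := Matrix.mulVec_add Z u v
  map_smul' a v := by
    ext i
    simp only [Matrix.mulVec, dotProduct, RingHom.id_apply, Pi.smul_apply,
      Finset.smul_sum, mul_smul_comm]

/-- A square matrix over `D` is semisimple (relative to the base field `F`) if the induced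
`F`-linear endomorphism of `ι → D` is semisimple. -/
def Matrix.IsSemisimpleMatrix (F : Type*) [Field F] {D : Type*} [DivisionRing D]
    [Algebra F D] {ι : Type*} [Fintype ι] (Z : Matrix ι ι D) : Prop :=
  (Matrix.mulVecEnd F Z).IsSemisimple


set_option linter.unusedSectionVars false
set_option maxHeartbeats 1000000

open Matrix Module MulOpposite


set_option linter.unusedSectionVars false
set_option maxHeartbeats 1000000

open Matrix Module MulOpposite

section RightModule

variable {D : Type*} [DivisionRing D] {ι : Type*} [Fintype ι] [DecidableEq ι]

/-- `mulVec` as a `Dᵐᵒᵖ`-linear map. -/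
def Matrix.mulVecLinOp (M : Matrix ι ι D) : (ι → D) →ₗ[Dᵐᵒᵖ] (ι → D) where
  toFun := M.mulVec
  map_add' := M.mulVec_add
  map_smul' a v := by
    ext i
    simp only [Matrix.mulVec, dotProduct, RingHom.id_apply, Pi.smul_apply,
      MulOpposite.smul_eq_mul_unop, Finset.sum_mul, mul_assoc]

@[simp] lemma Matrix.mulVecLinOp_apply (M : Matrix ι ι D) (v : ι → D) :
    M.mulVecLinOp v = M.mulVec v := rfl

lemma Matrix.eq_of_mulVec_single_eq {M N : Matrix ι ι D}
    (h : ∀ j, M.mulVec (Pi.single j 1) = N.mulVec (Pi.single j 1)) : M = N := by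
  ext i j
  have := congrFun (h j) i
  simpa using this

/-- The matrix of a `Dᵐᵒᵖ`-linear endomorphism of `ι → D`. -/
def Matrix.ofEndOp (f : (ι → D) →ₗ[Dᵐᵒᵖ] (ι → D)) : Matrix ι ι D :=
  fun i j => f (Pi.single j 1) i

lemma Matrix.ofEndOp_mulVec (f : (ι → D) →ₗ[Dᵐᵒᵖ] (ι → D)) (v : ι → D) :
    (Matrix.ofEndOp f).mulVec v = f v := by
  have hv : v = ∑ j, (op (v j)) • Pi.single j (1 : D) := by
    ext k
    simp [Pi.single_apply, MulOpposite.smul_eq_mul_unop, Finset.sum_ite_eq]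
  ext i
  calc (Matrix.ofEndOp f).mulVec v i = ∑ j, f (Pi.single j 1) i * v j := rfl
  _ = (∑ j, (op (v j)) • f (Pi.single j 1)) i := by
      simp [Finset.sum_apply, MulOpposite.smul_eq_mul_unop]
  _ = f v i := by
      conv_rhs => rw [hv]
      simp [map_sum]

lemma Matrix.ofEndOp_mulVecLinOp (M : Matrix ι ι D) :
    Matrix.ofEndOp M.mulVecLinOp = M := by
  apply Matrix.eq_of_mulVec_single_eq
  intro j
  rw [Matrix.ofEndOp_mulVec]
  rfl

/-- The invertible matrix attached to a `Dᵐᵒᵖ`-linear automorphism of `ι → D`. -/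
noncomputable def Matrix.unitsOfEndOp (g : (ι → D) ≃ₗ[Dᵐᵒᵖ] (ι → D)) : (Matrix ι ι D)ˣ where
  val := Matrix.ofEndOp (g : (ι → D) →ₗ[Dᵐᵒᵖ] (ι → D))
  inv := Matrix.ofEndOp (g.symm : (ι → D) →ₗ[Dᵐᵒᵖ] (ι → D))
  val_inv := by
    apply Matrix.eq_of_mulVec_single_eq
    intro j
    rw [← Matrix.mulVec_mulVec, Matrix.ofEndOp_mulVec, Matrix.ofEndOp_mulVec, Matrix.one_mulVec]
    simp
  inv_val := by
    apply Matrix.eq_of_mulVec_single_eq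
    intro j
    rw [← Matrix.mulVec_mulVec, Matrix.ofEndOp_mulVec, Matrix.ofEndOp_mulVec, Matrix.one_mulVec]
    simp

@[simp] lemma Matrix.unitsOfEndOp_val_mulVec (g : (ι → D) ≃ₗ[Dᵐᵒᵖ] (ι → D)) (v : ι → D) :
    (Matrix.unitsOfEndOp g).val.mulVec v = g v := Matrix.ofEndOp_mulVec _ v

@[simp] lemma Matrix.unitsOfEndOp_inv_mulVec (g : (ι → D) ≃ₗ[Dᵐᵒᵖ] (ι → D)) (v : ι → D) :
    ((Matrix.unitsOfEndOp g)⁻¹).val.mulVec v = g.symm v := Matrix.ofEndOp_mulVec _ v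

/-- `op` as a `Dᵐᵒᵖ`-linear equivalence `D ≃ Dᵐᵒᵖ`. -/
def MulOpposite.opLinearEquivOp (D : Type*) [DivisionRing D] : D ≃ₗ[Dᵐᵒᵖ] Dᵐᵒᵖ where
  toFun := op
  invFun := unop
  left_inv _ := rfl
  right_inv _ := rfl
  map_add' _ _ := rfl
  map_smul' a x := by
    simp only [RingHom.id_apply, MulOpposite.smul_eq_mul_unop, smul_eq_mul, op_mul, op_unop]

/-- `ι → D` is `Dᵐᵒᵖ`-linearly equivalent to `ι → Dᵐᵒᵖ`. -/
def Matrix.opPiEquiv (D : Type*) [DivisionRing D] (ι : Type*) :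
    (ι → D) ≃ₗ[Dᵐᵒᵖ] (ι → Dᵐᵒᵖ) :=
  LinearEquiv.piCongrRight fun _ => MulOpposite.opLinearEquivOp D

noncomputable def Matrix.stdBasisOp (D : Type*) [DivisionRing D] (ι : Type*) [Fintype ι] :
    Basis ι Dᵐᵒᵖ (ι → D) :=
  Basis.ofEquivFun (Matrix.opPiEquiv D ι)

instance (D : Type*) [DivisionRing D] (ι : Type*) [Fintype ι] :
    Module.Finite Dᵐᵒᵖ (ι → D) :=
  Module.Finite.of_basis (Matrix.stdBasisOp D ι)

lemma Matrix.finrank_pi_op (D : Type*) [DivisionRing D] (ι : Type*) [Fintype ι] :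
    Module.finrank Dᵐᵒᵖ (ι → D) = Fintype.card ι :=
  Module.finrank_eq_card_basis (Matrix.stdBasisOp D ι)

lemma Matrix.reindex_mulVec_eq {κ : Type*} [Fintype κ] [DecidableEq κ]
    (Q : Matrix ι ι D) (σ : ι ≃ κ) (v : κ → D) :
    (Matrix.reindex σ σ Q).mulVec v = (Q.mulVec (v ∘ σ)) ∘ σ.symm := by
  funext k
  simp only [Matrix.mulVec, dotProduct, Matrix.reindex_apply, Matrix.submatrix_apply,
    Function.comp_apply]
  exact (Finset.sum_equiv σ (by simp) (by intro j _; simp)).symm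

end RightModule

section SSF
variable (F : Type*) [Field F] {D : Type*} [DivisionRing D] [Algebra F D]
  {ι : Type*} [Fintype ι] [DecidableEq ι]

@[simp] lemma Matrix.mulVecEnd_apply (Z : Matrix ι ι D) (v : ι → D) :
    Matrix.mulVecEnd F Z v = Z.mulVec v := rfl

lemma Matrix.mulVecEnd_mul (M N : Matrix ι ι D) :
    Matrix.mulVecEnd F (M * N) = Matrix.mulVecEnd F M * Matrix.mulVecEnd F N :=
  LinearMap.ext fun v => (Matrix.mulVec_mulVec v M N).symm

/-- Conjugation preserves semisimplicity of matrices. -/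
lemma Matrix.IsSemisimpleMatrix.units_conj {M : Matrix ι ι D} (G : (Matrix ι ι D)ˣ)
    (h : M.IsSemisimpleMatrix F) :
    (G.val * M * (G⁻¹).val).IsSemisimpleMatrix F := by
  let e : (ι → D) ≃ₗ[F] (ι → D) :=
    LinearEquiv.ofLinear (Matrix.mulVecEnd F G.val) (Matrix.mulVecEnd F (G⁻¹).val)
      (LinearMap.ext fun v => by
          show G.val.mulVec ((G⁻¹).val.mulVec v) = v
          rw [Matrix.mulVec_mulVec, Units.mul_inv, Matrix.one_mulVec])
      (LinearMap.ext fun v => by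
          show (G⁻¹).val.mulVec (G.val.mulVec v) = v
          rw [Matrix.mulVec_mulVec, Units.inv_mul, Matrix.one_mulVec])
  refine (LinearEquiv.isSemisimple_iff (Matrix.mulVecEnd F M)
    (Matrix.mulVecEnd F (G.val * M * (G⁻¹).val)) e ?_).mp h
  apply LinearMap.ext
  intro v
  show G.val.mulVec (M.mulVec v) = (G.val * M * (G⁻¹).val).mulVec (G.val.mulVec v)
  rw [Matrix.mulVec_mulVec, Matrix.mulVec_mulVec, Units.inv_mul_cancel_right]

/-- Reindexing preserves semisimplicity. -/
lemma Matrix.IsSemisimpleMatrix.of_reindex {κ : Type*} [Fintype κ] (σ : ι ≃ κ)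
    {M : Matrix ι ι D} (h : (Matrix.reindex σ σ M).IsSemisimpleMatrix F) :
    M.IsSemisimpleMatrix F := by
  let e : (ι → D) ≃ₗ[F] (κ → D) :=
    { toFun := fun v => v ∘ σ.symm
      invFun := fun w => w ∘ σ
      map_add' := fun u v => rfl
      map_smul' := fun a v => rfl
      left_inv := fun v => by ext i; simp
      right_inv := fun w => by ext k; simp }
  refine (LinearEquiv.isSemisimple_iff (Matrix.mulVecEnd F M)
    (Matrix.mulVecEnd F (Matrix.reindex σ σ M)) e ?_).mpr h
  apply LinearMap.ext
  intro v
  funext k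
  show M.mulVec v (σ.symm k) = (Matrix.reindex σ σ M).mulVec (v ∘ σ.symm) k
  simp only [Matrix.mulVec, dotProduct, Matrix.reindex_apply, Matrix.submatrix_apply,
    Function.comp_apply]
  exact Finset.sum_equiv σ (by simp) (by intro j _; simp)

/-- Semisimplicity passes to diagonal blocks. -/
lemma Matrix.IsSemisimpleMatrix.of_fromBlocks_diag {κ : Type*} [Fintype κ]
    {M : Matrix ι ι D} {N : Matrix κ κ D}
    (h : (Matrix.fromBlocks M 0 0 N).IsSemisimpleMatrix F) :
    M.IsSemisimpleMatrix F := by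
  set f := Matrix.mulVecEnd F (Matrix.fromBlocks M 0 0 N) with hf
  have key : ∀ v : ι ⊕ κ → D,
      f v = Sum.elim (M.mulVec (v ∘ Sum.inl)) (N.mulVec (v ∘ Sum.inr)) := by
    intro v
    have hv : v = Sum.elim (v ∘ Sum.inl) (v ∘ Sum.inr) := by
      ext x; cases x <;> rfl
    show (Matrix.fromBlocks M 0 0 N).mulVec v = _
    conv_lhs => rw [hv]
    rw [Matrix.fromBlocks_mulVec]
    simp
  set p : Submodule F (ι ⊕ κ → D) :=
    LinearMap.ker (LinearMap.funLeft F D Sum.inr) with hp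
  have hmem : ∀ v : ι ⊕ κ → D, v ∈ p ↔ v ∘ Sum.inr = 0 := fun v => Iff.rfl
  have hinvt : p ∈ f.invtSubmodule := by
    intro v hv
    simp only [Submodule.mem_comap]
    rw [hmem] at hv ⊢
    rw [key]
    ext k
    simp [hv]
  have hres := h.restrict hinvt
  let e : p ≃ₗ[F] (ι → D) :=
    { toFun := fun x => (x : ι ⊕ κ → D) ∘ Sum.inl
      invFun := fun c => ⟨Sum.elim c 0, by rw [hmem]; rfl⟩
      map_add' := fun u v => rfl
      map_smul' := fun a v => rfl
      left_inv := fun x => by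
        apply Subtype.ext
        ext y
        cases y with
        | inl i => rfl
        | inr k => exact (congrFun ((hmem _).mp x.2) k).symm
      right_inv := fun c => rfl }
  refine (LinearEquiv.isSemisimple_iff (f.restrict hinvt) (Matrix.mulVecEnd F M) e ?_).mp hres
  apply LinearMap.ext
  intro x
  funext i
  show (f (x : ι ⊕ κ → D)) (Sum.inl i) = M.mulVec ((x : ι ⊕ κ → D) ∘ Sum.inl) i
  rw [key]
  rfl

/-- For a semisimple endomorphism of a finite-dimensional space,
the kernel and range are complementary. -/
lemma isCompl_ker_range_of_isSemisimple {V : Type*} [AddCommGroup V] [Module F V]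
    [FiniteDimensional F V] {f : Module.End F V} (h : f.IsSemisimple) :
    IsCompl (LinearMap.ker f) (LinearMap.range f) := by
  have hker : LinearMap.ker f ∈ f.invtSubmodule := by
    intro x hx
    simp only [Submodule.mem_comap]
    simp only [LinearMap.mem_ker] at hx ⊢
    simp [hx]
  obtain ⟨W, hW, hcompl⟩ := (Module.End.isSemisimple_iff.mp h) _ hker
  have hle : LinearMap.range f ≤ W := by
    have h1 : LinearMap.range f = Submodule.map f (LinearMap.ker f ⊔ W) := by
      rw [codisjoint_iff.mp hcompl.codisjoint, LinearMap.range_eq_map]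
    rw [h1, Submodule.map_sup]
    have h2 : Submodule.map f (LinearMap.ker f) = ⊥ := by
      rw [Submodule.eq_bot_iff]
      rintro x ⟨y, hy, rfl⟩
      exact hy
    rw [h2, bot_sup_eq]
    exact Submodule.map_le_iff_le_comap.mpr hW
  have hfr : finrank F W = finrank F (LinearMap.range f) := by
    have h1 := Submodule.finrank_add_eq_of_isCompl hcompl
    have h2 := LinearMap.finrank_range_add_finrank_ker f
    omega
  have : LinearMap.range f = W := Submodule.eq_of_le_of_finrank_le hle hfr.le
  exact this ▸ hcompl

end SSF

section NormalForm

variable {D : Type*} [DivisionRing D]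

lemma exists_normal_form {m : ℕ} (B P : Matrix (Fin m) (Fin m) D)
    (hc1 : IsCompl (LinearMap.range B.mulVecLinOp) (LinearMap.ker P.mulVecLinOp))
    (hc2 : IsCompl (LinearMap.range P.mulVecLinOp) (LinearMap.ker B.mulVecLinOp)) :
    ∃ (h₁ h₂ : (Matrix (Fin m) (Fin m) D)ˣ) (r : ℕ) (hr : r ≤ m)
      (A : Matrix (Fin r) (Fin r) D),
      IsUnit A ∧
      h₁.val * B * (h₂⁻¹).val =
        Matrix.reindex (finSumFinEquiv.trans (finCongr (Nat.add_sub_cancel' hr)))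
          (finSumFinEquiv.trans (finCongr (Nat.add_sub_cancel' hr)))
          (Matrix.fromBlocks 1 0 0 0) ∧
      h₂.val * P * (h₁⁻¹).val =
        Matrix.reindex (finSumFinEquiv.trans (finCongr (Nat.add_sub_cancel' hr)))
          (finSumFinEquiv.trans (finCongr (Nat.add_sub_cancel' hr)))
          (Matrix.fromBlocks A 0 0 0) := by
  classical
  set gB := B.mulVecLinOp with hgB
  set gP := P.mulVecLinOp with hgP
  have hm : Module.finrank Dᵐᵒᵖ (Fin m → D) = m := by
    rw [Matrix.finrank_pi_op]; simp
  set r := Module.finrank Dᵐᵒᵖ (LinearMap.range gB) with hrdef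
  have hr : r ≤ m := hm ▸ (LinearMap.range gB).finrank_le
  have hcount1 := Submodule.finrank_add_eq_of_isCompl hc1
  rw [hm, ← hrdef] at hcount1
  have hrn := LinearMap.finrank_range_add_finrank_ker gP
  rw [hm] at hrn
  have hrP : Module.finrank Dᵐᵒᵖ (LinearMap.range gP) = r := by omega
  have hkP : Module.finrank Dᵐᵒᵖ (LinearMap.ker gP) = m - r := by omega
  have hcount2 := Submodule.finrank_add_eq_of_isCompl hc2
  rw [hm, hrP] at hcount2
  have hkB : Module.finrank Dᵐᵒᵖ (LinearMap.ker gB) = m - r := by omega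
  -- bases
  let bRB : Basis (Fin r) Dᵐᵒᵖ (LinearMap.range gB) :=
    Module.finBasisOfFinrankEq Dᵐᵒᵖ _ rfl
  let ψ : (LinearMap.range gP) →ₗ[Dᵐᵒᵖ] (LinearMap.range gB) :=
    LinearMap.codRestrict _ (gB.domRestrict _) fun x => LinearMap.mem_range_self gB x.val
  have hψ : ∀ x : LinearMap.range gP, (ψ x : Fin m → D) = gB x.val := fun x => rfl
  have hψinj : Function.Injective ψ := by
    rw [← LinearMap.ker_eq_bot, Submodule.eq_bot_iff]
    rintro ⟨x, hx⟩ hker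
    have hx0 : gB x = 0 := by
      have := congrArg Subtype.val hker
      simpa [hψ] using this
    have hmem : x ∈ LinearMap.range gP ⊓ LinearMap.ker gB := ⟨hx, hx0⟩
    have hx' : x = 0 := by
      rwa [disjoint_iff.mp hc2.disjoint, Submodule.mem_bot] at hmem
    exact Subtype.ext hx'
  let ψe : (LinearMap.range gP) ≃ₗ[Dᵐᵒᵖ] (LinearMap.range gB) :=
    LinearMap.linearEquivOfInjective ψ hψinj (by rw [hrP])
  let bRP : Basis (Fin r) Dᵐᵒᵖ (LinearMap.range gP) := bRB.map ψe.symm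
  have hBP : ∀ i, gB ((bRP i : Fin m → D)) = (bRB i : Fin m → D) := by
    intro i
    have h1 : ψe (bRP i) = bRB i := by
      simp [bRP, Basis.map_apply]
    have h2 := congrArg Subtype.val h1
    rw [show (ψe (bRP i) : Fin m → D) = gB (bRP i).val from rfl] at h2
    exact h2
  let bKP : Basis (Fin (m - r)) Dᵐᵒᵖ (LinearMap.ker gP) :=
    Module.finBasisOfFinrankEq Dᵐᵒᵖ _ hkP
  let bKB : Basis (Fin (m - r)) Dᵐᵒᵖ (LinearMap.ker gB) :=
    Module.finBasisOfFinrankEq Dᵐᵒᵖ _ hkB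
  let b₁ : Basis (Fin r ⊕ Fin (m - r)) Dᵐᵒᵖ (Fin m → D) :=
    (bRB.prod bKP).map (Submodule.prodEquivOfIsCompl _ _ hc1)
  let b₂ : Basis (Fin r ⊕ Fin (m - r)) Dᵐᵒᵖ (Fin m → D) :=
    (bRP.prod bKB).map (Submodule.prodEquivOfIsCompl _ _ hc2)
  have hb₁l : ∀ i, b₁ (Sum.inl i) = (bRB i : Fin m → D) := by
    intro i
    simp [b₁, Basis.map_apply, Submodule.coe_prodEquivOfIsCompl']
  have hb₁r : ∀ j, b₁ (Sum.inr j) = (bKP j : Fin m → D) := by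
    intro j
    simp [b₁, Basis.map_apply, Submodule.coe_prodEquivOfIsCompl']
  have hb₂l : ∀ i, b₂ (Sum.inl i) = (bRP i : Fin m → D) := by
    intro i
    simp [b₂, Basis.map_apply, Submodule.coe_prodEquivOfIsCompl']
  have hb₂r : ∀ j, b₂ (Sum.inr j) = (bKB j : Fin m → D) := by
    intro j
    simp [b₂, Basis.map_apply, Submodule.coe_prodEquivOfIsCompl']
  set e : Fin r ⊕ Fin (m - r) ≃ Fin m :=
    finSumFinEquiv.trans (finCongr (Nat.add_sub_cancel' hr)) with he
  -- change of basis automorphisms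
  let g₁ : (Fin m → D) ≃ₗ[Dᵐᵒᵖ] (Fin m → D) :=
    (b₁.reindex e).equivFun.trans (Matrix.opPiEquiv D (Fin m)).symm
  let g₂ : (Fin m → D) ≃ₗ[Dᵐᵒᵖ] (Fin m → D) :=
    (b₂.reindex e).equivFun.trans (Matrix.opPiEquiv D (Fin m)).symm
  have hg : ∀ (b : Basis (Fin r ⊕ Fin (m - r)) Dᵐᵒᵖ (Fin m → D)) (x : Fin r ⊕ Fin (m - r)),
      ((b.reindex e).equivFun.trans (Matrix.opPiEquiv D (Fin m)).symm) (b x)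
        = Pi.single (e x) (1 : D) := by
    intro b x
    have h1 : b x = (b.reindex e) (e x) := by simp [Basis.reindex_apply]
    rw [h1]
    show (Matrix.opPiEquiv D (Fin m)).symm ((b.reindex e).equivFun ((b.reindex e) (e x))) = _
    funext j
    have h2 : (b.reindex e).equivFun ((b.reindex e) (e x)) j
        = if e x = j then 1 else 0 := Basis.equivFun_self _ _ _
    have h3 : (Matrix.opPiEquiv D (Fin m)).symm ((b.reindex e).equivFun ((b.reindex e) (e x))) j
        = unop ((b.reindex e).equivFun ((b.reindex e) (e x)) j) := rfl
    rw [h3, h2]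
    rcases eq_or_ne j (e x) with h | h
    · simp [h, Pi.single_apply]
    · simp [Pi.single_apply, h, Ne.symm h]
  have hg₁ : ∀ x, g₁ (b₁ x) = Pi.single (e x) (1 : D) := hg b₁
  have hg₂ : ∀ x, g₂ (b₂ x) = Pi.single (e x) (1 : D) := hg b₂
  have hg₁s : ∀ x, g₁.symm (Pi.single (e x) (1 : D)) = b₁ x := fun x => by
    rw [← hg₁ x, LinearEquiv.symm_apply_apply]
  have hg₂s : ∀ x, g₂.symm (Pi.single (e x) (1 : D)) = b₂ x := fun x => by
    rw [← hg₂ x, LinearEquiv.symm_apply_apply]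
  let h₁u : (Matrix (Fin m) (Fin m) D)ˣ := Matrix.unitsOfEndOp g₁
  let h₂u : (Matrix (Fin m) (Fin m) D)ˣ := Matrix.unitsOfEndOp g₂
  -- the matrix A
  let A : Matrix (Fin r) (Fin r) D :=
    fun k i => (g₂ (P.mulVec (b₁ (Sum.inl i)))) (e (Sum.inl k))
  -- two key matrix identities
  have mulVec3 : ∀ (M : Matrix (Fin m) (Fin m) D) (u₁ u₂ : (Matrix (Fin m) (Fin m) D)ˣ)
      (v : Fin m → D),
      (u₁.val * M * u₂.val).mulVec v = u₁.val.mulVec (M.mulVec (u₂.val.mulVec v)) := by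
    intro M u₁ u₂ v
    rw [← Matrix.mulVec_mulVec, ← Matrix.mulVec_mulVec]
  have hsupp : ∀ u, u ∈ LinearMap.range gP → ∀ jj, g₂ u (e (Sum.inr jj)) = 0 := by
    intro u hu jj
    have hx := bRP.sum_repr ⟨u, hu⟩
    have hcoe : u = ∑ k, (bRP.repr ⟨u, hu⟩ k) • ((bRP k : Fin m → D)) := by
      have h : ((∑ i, (bRP.repr ⟨u, hu⟩) i • bRP i : LinearMap.range gP) : Fin m → D)
          = ∑ k, (bRP.repr ⟨u, hu⟩ k) • ((bRP k : Fin m → D)) := by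
        push_cast
        rfl
      rw [← h, hx]
    rw [hcoe, map_sum]
    rw [Finset.sum_apply]
    apply Finset.sum_eq_zero
    intro k _
    rw [_root_.map_smul]
    have : g₂ ((bRP k : Fin m → D)) = Pi.single (e (Sum.inl k)) (1 : D) := by
      rw [← hb₂l k]; exact hg₂ (Sum.inl k)
    rw [this]
    have hne : e (Sum.inr jj) ≠ e (Sum.inl k) := by
      simp [EmbeddingLike.apply_eq_iff_eq]
    simp [Pi.single_apply, hne, MulOpposite.smul_eq_mul_unop]
  have EqB : h₁u.val * B * (h₂u⁻¹).val =
      Matrix.reindex e e (Matrix.fromBlocks 1 0 0 0) := by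
    apply Matrix.eq_of_mulVec_single_eq
    intro j
    obtain ⟨x, rfl⟩ : ∃ x, j = e x := ⟨e.symm j, (e.apply_symm_apply j).symm⟩
    rw [mulVec3, Matrix.unitsOfEndOp_inv_mulVec, hg₂s x]
    rw [Matrix.reindex_mulVec_eq]
    have hv : (Pi.single (e x) (1 : D)) ∘ e = Pi.single x 1 := by
      funext y
      simp only [Function.comp_apply, Pi.single_apply, EmbeddingLike.apply_eq_iff_eq]
    rw [hv]
    cases x with
    | inl i =>
        rw [hb₂l i]
        have : B.mulVec ((bRP i : Fin m → D)) = b₁ (Sum.inl i) := by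
          rw [hb₁l i]; exact hBP i
        rw [this, Matrix.unitsOfEndOp_val_mulVec, hg₁ (Sum.inl i)]
        funext i'
        obtain ⟨a, rfl⟩ : ∃ a, i' = e a := ⟨e.symm i', (e.apply_symm_apply i').symm⟩
        simp only [Function.comp_apply, Equiv.symm_apply_apply, Matrix.mulVec_single, mul_one]
        cases a with
        | inl a' =>
            simp [Pi.single_apply, EmbeddingLike.apply_eq_iff_eq, Matrix.one_apply,
              Matrix.fromBlocks_apply₁₁, eq_comm]
        | inr b' =>
            simp [Pi.single_apply, EmbeddingLike.apply_eq_iff_eq, Matrix.fromBlocks_apply₂₁]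
    | inr jj =>
        rw [hb₂r jj]
        have hker : B.mulVec ((bKB jj : Fin m → D)) = 0 := (bKB jj).2
        rw [hker, Matrix.mulVec_zero]
        funext i'
        simp only [Function.comp_apply]
        rw [Matrix.mulVec_single]
        cases h : e.symm i' with
        | inl a' => simp [Matrix.fromBlocks, h]
        | inr b' => simp [Matrix.fromBlocks, h]
  have EqP : h₂u.val * P * (h₁u⁻¹).val =
      Matrix.reindex e e (Matrix.fromBlocks A 0 0 0) := by
    apply Matrix.eq_of_mulVec_single_eq
    intro j
    obtain ⟨x, rfl⟩ : ∃ x, j = e x := ⟨e.symm j, (e.apply_symm_apply j).symm⟩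
    rw [mulVec3, Matrix.unitsOfEndOp_inv_mulVec, hg₁s x]
    rw [Matrix.reindex_mulVec_eq]
    have hv : (Pi.single (e x) (1 : D)) ∘ e = Pi.single x 1 := by
      funext y
      simp only [Function.comp_apply, Pi.single_apply, EmbeddingLike.apply_eq_iff_eq]
    rw [hv]
    cases x with
    | inl i =>
        rw [Matrix.unitsOfEndOp_val_mulVec]
        funext i'
        obtain ⟨a, rfl⟩ : ∃ a, i' = e a := ⟨e.symm i', (e.apply_symm_apply i').symm⟩
        simp only [Function.comp_apply, Equiv.symm_apply_apply]
        rw [Matrix.mulVec_single]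
        cases a with
        | inl k =>
            show g₂ (P.mulVec (b₁ (Sum.inl i))) (e (Sum.inl k)) = _
            simp [Matrix.fromBlocks, A]
        | inr jj =>
            show g₂ (P.mulVec (b₁ (Sum.inl i))) (e (Sum.inr jj)) = _
            rw [hsupp (P.mulVec (b₁ (Sum.inl i))) ⟨b₁ (Sum.inl i), rfl⟩ jj]
            simp [Matrix.fromBlocks]
    | inr jj =>
        rw [hb₁r jj]
        have hker : P.mulVec ((bKP jj : Fin m → D)) = 0 := (bKP jj).2
        rw [hker, Matrix.mulVec_zero]
        funext i'
        obtain ⟨a, rfl⟩ : ∃ a, i' = e a := ⟨e.symm i', (e.apply_symm_apply i').symm⟩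
        simp only [Function.comp_apply, Equiv.symm_apply_apply, Matrix.mulVec_single, mul_one]
        cases a <;> simp
  -- A is invertible
  have hAker : LinearMap.ker (Matrix.mulVecLinOp A) = ⊥ := by
    rw [Submodule.eq_bot_iff]
    intro c hc
    rw [LinearMap.mem_ker] at hc
    have hc' : A.mulVec c = 0 := hc
    set z : Fin m → D := (Sum.elim c 0) ∘ e.symm with hz
    have hz1 : z ∘ e = Sum.elim c 0 := by
      funext y; simp [hz]
    have hP₀ : (Matrix.reindex e e (Matrix.fromBlocks A 0 0 0)).mulVec z = 0 := by
      rw [Matrix.reindex_mulVec_eq, hz1, Matrix.fromBlocks_mulVec]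
      funext i'
      simp [hc']
    have hB₀ : (Matrix.reindex e e
        (Matrix.fromBlocks (1 : Matrix (Fin r) (Fin r) D) 0 0 0)).mulVec z = z := by
      rw [Matrix.reindex_mulVec_eq, hz1, Matrix.fromBlocks_mulVec]
      funext i'
      simp only [Function.comp_apply, hz]
      cases h : e.symm i' with
      | inl a' => simp [h, Matrix.one_mulVec]
      | inr b' => simp [h]
    have h1 : P.mulVec (g₁.symm z) = 0 := by
      have := congrArg (fun M => M.mulVec z) EqP
      rw [mulVec3, Matrix.unitsOfEndOp_inv_mulVec, Matrix.unitsOfEndOp_val_mulVec, hP₀] at this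
      exact g₂.injective (by rw [this, map_zero])
    have h2 : g₁.symm z ∈ LinearMap.range gB := by
      have := congrArg (fun M => M.mulVec z) EqB
      rw [mulVec3, Matrix.unitsOfEndOp_inv_mulVec, Matrix.unitsOfEndOp_val_mulVec, hB₀] at this
      refine ⟨g₂.symm z, ?_⟩
      show B.mulVec (g₂.symm z) = g₁.symm z
      conv_rhs => rw [← this]
      rw [LinearEquiv.symm_apply_apply]
    have hmem : g₁.symm z ∈ LinearMap.range gB ⊓ LinearMap.ker gP := ⟨h2, h1⟩
    have hz0 : g₁.symm z = 0 := by
      rwa [disjoint_iff.mp hc1.disjoint, Submodule.mem_bot] at hmem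
    have hzz : z = 0 := by
      have := congrArg g₁ hz0
      rwa [LinearEquiv.apply_symm_apply, map_zero] at this
    funext k
    have := congrFun hzz (e (Sum.inl k))
    simp only [hz, Function.comp_apply, Equiv.symm_apply_apply] at this
    simpa using this
  have hAbij : Function.Bijective (Matrix.mulVecLinOp A) := by
    have hinj : Function.Injective (Matrix.mulVecLinOp A) := by
      exact LinearMap.ker_eq_bot.mp hAker
    exact ⟨hinj, LinearMap.injective_iff_surjective.mp hinj⟩
  have hA : IsUnit A := by
    let gA := LinearEquiv.ofBijective (Matrix.mulVecLinOp A) hAbij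
    refine ⟨Matrix.unitsOfEndOp gA, ?_⟩
    show Matrix.ofEndOp (gA : (Fin r → D) →ₗ[Dᵐᵒᵖ] (Fin r → D)) = A
    have : (gA : (Fin r → D) →ₗ[Dᵐᵒᵖ] (Fin r → D)) = Matrix.mulVecLinOp A := rfl
    rw [this, Matrix.ofEndOp_mulVecLinOp]
  exact ⟨h₁u, h₂u, r, hr, A, hA, EqB, EqP⟩

end NormalForm


/-- Every semisimple anti-block-diagonal element `X = fromBlocks 0 B P 0` of `𝔰(F)` is
conjugate under `H = GL_m(D) × GL_m(D)` to a normal form `X(A)`, where `A` is an invertible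
semisimple matrix of some size `r ≤ m`. -/
theorem semisimple_orbit_normal_form_lie {p : ℕ} [Fact p.Prime]
    (F : Type*) [Field F] [Algebra ℚ_[p] F] [FiniteDimensional ℚ_[p] F]
    {D : Type*} [DivisionRing D] [Algebra F D] [FiniteDimensional F D]
    [Algebra.IsCentral F D]
    {m : ℕ} (hm : 1 ≤ m) (B P : Matrix (Fin m) (Fin m) D)
    (hss : Matrix.IsSemisimpleMatrix F (Matrix.fromBlocks 0 B P 0)) :
    ∃ (h₁ h₂ : (Matrix (Fin m) (Fin m) D)ˣ) (r : ℕ) (hr : r ≤ m)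
      (A : Matrix (Fin r) (Fin r) D),
        IsUnit A ∧ Matrix.IsSemisimpleMatrix F A ∧
        (let e : Fin r ⊕ Fin (m - r) ≃ Fin m :=
          finSumFinEquiv.trans (finCongr (Nat.add_sub_cancel' hr))
        Matrix.fromBlocks h₁.val 0 0 h₂.val * Matrix.fromBlocks 0 B P 0 *
            Matrix.fromBlocks (h₁⁻¹).val 0 0 (h₂⁻¹).val =
          Matrix.fromBlocks 0 (Matrix.reindex e e (Matrix.fromBlocks 1 0 0 0))
            (Matrix.reindex e e (Matrix.fromBlocks A 0 0 0)) 0) := by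
  classical
  set X : Matrix (Fin m ⊕ Fin m) (Fin m ⊕ Fin m) D := Matrix.fromBlocks 0 B P 0 with hX
  set f := Matrix.mulVecEnd F X with hf
  have hcompl : IsCompl (LinearMap.ker f) (LinearMap.range f) :=
    isCompl_ker_range_of_isSemisimple F hss
  -- the two set-level consequences of complementarity
  have dis : ∀ v : (Fin m ⊕ Fin m) → D, X.mulVec v = 0 → (∃ w, X.mulVec w = v) → v = 0 := by
    intro v h1 ⟨w, h2⟩
    exact Submodule.disjoint_def.mp hcompl.disjoint v h1 ⟨w, h2⟩
  have codis : ∀ v : (Fin m ⊕ Fin m) → D,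
      ∃ k w, X.mulVec k = 0 ∧ v = k + X.mulVec w := by
    have htop : LinearMap.ker f ⊔ LinearMap.range f = ⊤ := codisjoint_iff.mp hcompl.codisjoint
    intro v
    have hv : v ∈ LinearMap.ker f ⊔ LinearMap.range f := htop ▸ Submodule.mem_top
    obtain ⟨k, hk, w', ⟨w, rfl⟩, hkw⟩ := Submodule.mem_sup.mp hv
    exact ⟨k, w, hk, hkw.symm⟩
  have hXmul : ∀ x y : Fin m → D,
      X.mulVec (Sum.elim x y) = Sum.elim (B.mulVec y) (P.mulVec x) := by
    intro x y
    rw [hX, Matrix.fromBlocks_mulVec]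
    simp
  have hsplit : ∀ v : (Fin m ⊕ Fin m) → D,
      v = Sum.elim (v ∘ Sum.inl) (v ∘ Sum.inr) := by
    intro v; funext x; cases x <;> rfl
  -- complementarity over Dᵐᵒᵖ
  have hc1 : IsCompl (LinearMap.range B.mulVecLinOp) (LinearMap.ker P.mulVecLinOp) := by
    constructor
    · rw [disjoint_iff, Submodule.eq_bot_iff]
      rintro v ⟨⟨w, hw⟩, hvk⟩
      have hvk' : P.mulVec v = 0 := hvk
      have hw' : B.mulVec w = v := hw
      have h0 : Sum.elim v (0 : Fin m → D) = 0 := by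
        refine dis _ ?_ ⟨Sum.elim (0 : Fin m → D) w, ?_⟩
        · rw [hXmul]
          funext x
          cases x with
          | inl i => simp
          | inr i => simp [hvk']
        · rw [hXmul]
          funext x
          cases x with
          | inl i => simp [hw']
          | inr i => simp
      funext i
      exact congrFun h0 (Sum.inl i)
    · rw [codisjoint_iff, eq_top_iff]
      intro v _
      obtain ⟨k, w, hk, hkw⟩ := codis (Sum.elim v (0 : Fin m → D))
      have hPk : P.mulVec (k ∘ Sum.inl) = 0 := by
        rw [hsplit k, hXmul] at hk
        funext i
        exact congrFun hk (Sum.inr i)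
      have hveq : v = (k ∘ Sum.inl) + B.mulVec (w ∘ Sum.inr) := by
        funext i
        have := congrFun hkw (Sum.inl i)
        simp only [Sum.elim_inl, Pi.add_apply] at this
        rw [this]
        have h2 : X.mulVec w (Sum.inl i) = B.mulVec (w ∘ Sum.inr) i := by
          conv_lhs => rw [hsplit w]
          rw [hXmul]
          rfl
        simp [h2]
      refine Submodule.mem_sup.mpr ⟨B.mulVec (w ∘ Sum.inr), ⟨w ∘ Sum.inr, rfl⟩,
        k ∘ Sum.inl, hPk, ?_⟩
      rw [hveq, add_comm]
  have hc2 : IsCompl (LinearMap.range P.mulVecLinOp) (LinearMap.ker B.mulVecLinOp) := by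
    constructor
    · rw [disjoint_iff, Submodule.eq_bot_iff]
      rintro v ⟨⟨w, hw⟩, hvk⟩
      have hvk' : B.mulVec v = 0 := hvk
      have hw' : P.mulVec w = v := hw
      have h0 : Sum.elim (0 : Fin m → D) v = 0 := by
        refine dis _ ?_ ⟨Sum.elim w (0 : Fin m → D), ?_⟩
        · rw [hXmul]
          funext x
          cases x with
          | inl i => simp [hvk']
          | inr i => simp
        · rw [hXmul]
          funext x
          cases x with
          | inl i => simp
          | inr i => simp [hw']
      funext i
      exact congrFun h0 (Sum.inr i)
    · rw [codisjoint_iff, eq_top_iff]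
      intro v _
      obtain ⟨k, w, hk, hkw⟩ := codis (Sum.elim (0 : Fin m → D) v)
      have hBk : B.mulVec (k ∘ Sum.inr) = 0 := by
        rw [hsplit k, hXmul] at hk
        funext i
        exact congrFun hk (Sum.inl i)
      have hveq : v = (k ∘ Sum.inr) + P.mulVec (w ∘ Sum.inl) := by
        funext i
        have := congrFun hkw (Sum.inr i)
        simp only [Sum.elim_inr, Pi.add_apply] at this
        rw [this]
        have h2 : X.mulVec w (Sum.inr i) = P.mulVec (w ∘ Sum.inl) i := by
          conv_lhs => rw [hsplit w]
          rw [hXmul]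
          rfl
        simp [h2]
      refine Submodule.mem_sup.mpr ⟨P.mulVec (w ∘ Sum.inl), ⟨w ∘ Sum.inl, rfl⟩,
        k ∘ Sum.inr, hBk, ?_⟩
      rw [hveq, add_comm]
  obtain ⟨h₁, h₂, r, hr, A, hA, EqB, EqP⟩ := exists_normal_form B P hc1 hc2
  set e : Fin r ⊕ Fin (m - r) ≃ Fin m :=
    finSumFinEquiv.trans (finCongr (Nat.add_sub_cancel' hr)) with he
  set B₀ : Matrix (Fin m) (Fin m) D :=
    Matrix.reindex e e (Matrix.fromBlocks 1 0 0 0) with hB₀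
  set P₀ : Matrix (Fin m) (Fin m) D :=
    Matrix.reindex e e (Matrix.fromBlocks A 0 0 0) with hP₀
  have key : Matrix.fromBlocks h₁.val 0 0 h₂.val * X *
      Matrix.fromBlocks (h₁⁻¹).val 0 0 (h₂⁻¹).val =
      Matrix.fromBlocks 0 (h₁.val * B * (h₂⁻¹).val) (h₂.val * P * (h₁⁻¹).val) 0 := by
    rw [hX, Matrix.fromBlocks_multiply, Matrix.fromBlocks_multiply]
    simp only [zero_mul, mul_zero, add_zero, zero_add, Matrix.zero_mul, Matrix.mul_zero]
  have keyEq : Matrix.fromBlocks h₁.val 0 0 h₂.val * X *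
      Matrix.fromBlocks (h₁⁻¹).val 0 0 (h₂⁻¹).val =
      Matrix.fromBlocks 0 B₀ P₀ 0 := by
    rw [key, EqB, EqP]
  -- semisimplicity of A
  let G : (Matrix (Fin m ⊕ Fin m) (Fin m ⊕ Fin m) D)ˣ :=
    ⟨Matrix.fromBlocks h₁.val 0 0 h₂.val, Matrix.fromBlocks (h₁⁻¹).val 0 0 (h₂⁻¹).val,
      by rw [Matrix.fromBlocks_multiply, Units.mul_inv, Units.mul_inv]
         rw [show ((0 : Matrix (Fin m) (Fin m) D) = (0 : Matrix (Fin m) (Fin m) D)) from rfl]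
         simp only [Matrix.mul_zero, Matrix.zero_mul, mul_zero, zero_mul, add_zero, zero_add]
         exact Matrix.fromBlocks_one,
      by rw [Matrix.fromBlocks_multiply, Units.inv_mul, Units.inv_mul]
         simp only [Matrix.mul_zero, Matrix.zero_mul, mul_zero, zero_mul, add_zero, zero_add]
         exact Matrix.fromBlocks_one⟩
  have hY : (Matrix.fromBlocks 0 B₀ P₀ 0).IsSemisimpleMatrix F := by
    have h := Matrix.IsSemisimpleMatrix.units_conj F G hss
    have hGv : G.val = Matrix.fromBlocks h₁.val 0 0 h₂.val := rfl
    have hGi : (G⁻¹).val = Matrix.fromBlocks (h₁⁻¹).val 0 0 (h₂⁻¹).val := rfl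
    rwa [hGv, hGi, keyEq] at h
  have hBP₀ : B₀ * P₀ = P₀ := by
    rw [hB₀, hP₀, Matrix.reindex_apply, Matrix.reindex_apply]
    rw [Matrix.submatrix_mul_equiv
      (Matrix.fromBlocks (1 : Matrix (Fin r) (Fin r) D) 0 0 0)
      (Matrix.fromBlocks A 0 0 0) (⇑e.symm) e.symm (⇑e.symm)]
    congr 1
    rw [Matrix.fromBlocks_multiply]
    simp
  have hPB₀ : P₀ * B₀ = P₀ := by
    rw [hB₀, hP₀, Matrix.reindex_apply, Matrix.reindex_apply]
    rw [Matrix.submatrix_mul_equiv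
      (Matrix.fromBlocks A 0 0 0)
      (Matrix.fromBlocks (1 : Matrix (Fin r) (Fin r) D) 0 0 0) (⇑e.symm) e.symm (⇑e.symm)]
    congr 1
    rw [Matrix.fromBlocks_multiply]
    simp
  have hYY : Matrix.fromBlocks 0 B₀ P₀ 0 * Matrix.fromBlocks 0 B₀ P₀ 0 =
      Matrix.fromBlocks P₀ 0 0 P₀ := by
    rw [Matrix.fromBlocks_multiply]
    simp [hBP₀, hPB₀]
  have hY2 : (Matrix.fromBlocks P₀ 0 0 P₀).IsSemisimpleMatrix F := by
    have h2 : ((Matrix.mulVecEnd F (Matrix.fromBlocks 0 B₀ P₀ 0)) ^ 2).IsSemisimple :=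
      Module.End.IsSemisimple.pow hY 2
    rw [pow_two, ← Matrix.mulVecEnd_mul, hYY] at h2
    exact h2
  have hP₀ss : P₀.IsSemisimpleMatrix F :=
    Matrix.IsSemisimpleMatrix.of_fromBlocks_diag F hY2
  have hQss : (Matrix.fromBlocks A 0 0 0 :
      Matrix (Fin r ⊕ Fin (m - r)) (Fin r ⊕ Fin (m - r)) D).IsSemisimpleMatrix F :=
    Matrix.IsSemisimpleMatrix.of_reindex F e hP₀ss
  have hAss : A.IsSemisimpleMatrix F :=
    Matrix.IsSemisimpleMatrix.of_fromBlocks_diag F hQss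
  exact ⟨h₁, h₂, r, hr, A, hA, hAss, keyEq⟩
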